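/- Let k ≥ 2 and A ∈ ℝ^{k×k} symmetric with positive off-diagonal entries, A_{ii} = c₁ and Σ_{j≠i}A_{ij} = c₂ for all i, with c₁ + c₂ > k. Then the global maximizers over [-1,1]^k of I(x) = (1/(2k²))⟨x,Ax⟩ - (1/k)Σ_i L*(x_i) are exactly the two points m*(1,...,1) and -m*(1,...,1), where m* ∈ (0,1) is the unique positive solution of artanh(m) = ((c₁+c₂)/k)·m. -/

import Mathlib

noncomputable def artanh (x : ℝ) : ℝ := (1/2) * Real.log ((1+x)/(1-x))

noncomputable def Lstar (x : ℝ) : ℝ :=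
  (1/2)*(1+x)*Real.log (1+x) + (1/2)*(1-x)*Real.log (1-x)

noncomputable def opNorm2 {k : ℕ} (M : Matrix (Fin k) (Fin k) ℝ) : ℝ :=
  ‖Matrix.toEuclideanCLM (𝕜 := ℝ) M‖

lemma Lstar_neg (x : ℝ) : Lstar (-x) = Lstar x := by
  unfold Lstar
  rw [show (1 + -x) = 1 - x by ring, show (1 - -x) = 1 + x by ring]
  ring

lemma continuous_Lstar : Continuous Lstar := by
  have h := Real.continuous_mul_log
  have c1 : Continuous (fun x : ℝ => (1+x) * Real.log (1+x)) :=
    h.comp (continuous_const.add continuous_id)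
  have c2 : Continuous (fun x : ℝ => (1-x) * Real.log (1-x)) :=
    h.comp (continuous_const.sub continuous_id)
  have : Lstar = fun x => (1/2) * ((1+x) * Real.log (1+x)) + (1/2) * ((1-x) * Real.log (1-x)) := by
    funext x; unfold Lstar; ring
  rw [this]
  exact (continuous_const.mul c1).add (continuous_const.mul c2)

lemma artanh_zero : artanh 0 = 0 := by
  unfold artanh; norm_num

lemma hasDerivAt_artanh {x : ℝ} (hx : x ∈ Set.Ioo (-1:ℝ) 1) :
    HasDerivAt artanh (1/(1-x^2)) x := by
  obtain ⟨h1, h2⟩ := hx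
  have hp : 0 < 1 + x := by linarith
  have hn : 0 < 1 - x := by linarith
  have hq : HasDerivAt (fun t : ℝ => (1+t)/(1-t)) (2/(1-x)^2) x := by
    have hnum : HasDerivAt (fun t : ℝ => 1 + t) 1 x := (hasDerivAt_id x).const_add 1
    have hden : HasDerivAt (fun t : ℝ => 1 - t) (-1) x := by
      simpa using (hasDerivAt_id x).const_sub 1
    have := hnum.div hden hn.ne'
    refine this.congr_deriv ?_
    field_simp
    ring
  have hlog : HasDerivAt (fun t : ℝ => Real.log ((1+t)/(1-t)))
      ((2/(1-x)^2) / ((1+x)/(1-x))) x := hq.log (by positivity)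
  have := hlog.const_mul (1/2 : ℝ)
  have heq : artanh = fun t : ℝ => (1/2) * Real.log ((1+t)/(1-t)) := rfl
  rw [heq]
  refine this.congr_deriv ?_
  rw [show (1:ℝ) - x^2 = (1+x)*(1-x) by ring]
  field_simp

lemma hasDerivAt_Lstar {x : ℝ} (hx : x ∈ Set.Ioo (-1:ℝ) 1) :
    HasDerivAt Lstar (artanh x) x := by
  obtain ⟨h1, h2⟩ := hx
  have hp : 0 < 1 + x := by linarith
  have hn : 0 < 1 - x := by linarith
  have hnum : HasDerivAt (fun t : ℝ => 1 + t) 1 x := (hasDerivAt_id x).const_add 1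
  have hden : HasDerivAt (fun t : ℝ => 1 - t) (-1) x := by
    simpa using (hasDerivAt_id x).const_sub 1
  have hl1 : HasDerivAt (fun t : ℝ => Real.log (1+t)) (1/(1+x)) x := by
    simpa using hnum.log hp.ne'
  have hl2 : HasDerivAt (fun t : ℝ => Real.log (1-t)) (-1/(1-x)) x := by
    simpa using hden.log hn.ne'
  have hA : HasDerivAt (fun t : ℝ => (1/2)*(1+t)*Real.log (1+t))
      ((1/2) * Real.log (1+x) + (1/2)*(1+x) * (1/(1+x))) x := by
    have := (hnum.const_mul (1/2 : ℝ)).mul hl1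
    refine this.congr_deriv ?_
    ring
  have hB : HasDerivAt (fun t : ℝ => (1/2)*(1-t)*Real.log (1-t))
      ((-1/2) * Real.log (1-x) + (1/2)*(1-x) * (-1/(1-x))) x := by
    have := (hden.const_mul (1/2 : ℝ)).mul hl2
    refine this.congr_deriv ?_
    ring
  have := hA.add hB
  have heq : Lstar = fun t : ℝ => (1/2)*(1+t)*Real.log (1+t) + (1/2)*(1-t)*Real.log (1-t) := rfl
  rw [heq]
  refine this.congr_deriv ?_
  unfold artanh
  rw [Real.log_div hp.ne' hn.ne']
  field_simp
  ring

lemma artanh_sign (a m : ℝ) (ha : 1 < a) (hm0 : 0 < m) (hm1 : m < 1)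
    (hmeq : artanh m = a * m) :
    (∀ t, 0 < t → t < m → artanh t < a * t) ∧ (∀ t, m < t → t < 1 → a * t < artanh t) := by
  set h : ℝ → ℝ := fun t => artanh t - a * t with hh
  have hderiv : ∀ u ∈ Set.Ioo (-1:ℝ) 1, HasDerivAt h (1/(1-u^2) - a) u := by
    intro u hu
    exact ((hasDerivAt_artanh hu).sub (((hasDerivAt_id u).const_mul a) : HasDerivAt (fun y => a * y) (a*1) u)).congr_deriv (by ring)
  have hmem : ∀ u : ℝ, 0 ≤ u → u < 1 → u ∈ Set.Ioo (-1:ℝ) 1 := by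
    intro u h1 h2; exact ⟨by linarith, h2⟩
  have hcont : ContinuousOn h (Set.Icc 0 m) := by
    intro u hu
    exact ((hderiv u (hmem u hu.1 (lt_of_le_of_lt hu.2 hm1))).continuousAt).continuousWithinAt
  have h0 : h 0 = 0 := by simp [hh, artanh]
  have hM : h m = 0 := by simp [hh, hmeq]
  -- Rolle
  obtain ⟨c, hc, hc0⟩ := exists_deriv_eq_zero (f := h) hm0 hcont (h0.trans hM.symm)
  have hcd : deriv h c = 1/(1-c^2) - a :=
    (hderiv c (hmem c hc.1.le (hc.2.trans hm1))).deriv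
  have hceq : 1/(1-c^2) = a := by
    rw [hcd] at hc0; linarith
  -- monotonicity of u ↦ 1/(1-u^2) on [0,1)
  have hphi : ∀ s t : ℝ, 0 ≤ s → s < t → t < 1 → 1/(1-s^2) < 1/(1-t^2) := by
    intro s t hs hst ht1
    have h1 : 0 < 1 - t^2 := by nlinarith
    have h2 : 1 - t^2 < 1 - s^2 := by nlinarith
    exact one_div_lt_one_div_of_lt h1 h2
  have hderiv' : ∀ u : ℝ, 0 ≤ u → u < 1 → deriv h u = 1/(1-u^2) - a := fun u h1 h2 =>
    (hderiv u (hmem u h1 h2)).deriv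
  -- h strictly anti on [0,c]
  have hanti : StrictAntiOn h (Set.Icc 0 c) := by
    apply strictAntiOn_of_deriv_neg (convex_Icc 0 c)
    · intro u hu
      exact ((hderiv u (hmem u hu.1 (by
        have := hu.2; have := hc.2; linarith [hm1]))).continuousAt).continuousWithinAt
    · intro u hu
      rw [interior_Icc] at hu
      have hu1 : u < 1 := by have := hu.2; have := hc.2; linarith
      rw [hderiv' u hu.1.le hu1]
      have := hphi u c hu.1.le hu.2 (by linarith [hc.2, hm1])
      rw [hceq] at this; linarith
  -- h strictly mono on [c, b] for b < 1
  have hmono : ∀ b : ℝ, c ≤ b → b < 1 → StrictMonoOn h (Set.Icc c b) := by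
    intro b hcb hb1
    apply strictMonoOn_of_deriv_pos (convex_Icc c b)
    · intro u hu
      exact ((hderiv u (hmem u (hc.1.le.trans hu.1) (lt_of_le_of_lt hu.2 hb1))).continuousAt).continuousWithinAt
    · intro u hu
      rw [interior_Icc] at hu
      have hu1 : u < 1 := lt_of_lt_of_le (lt_of_lt_of_le hu.2 le_rfl) (by linarith)
      rw [hderiv' u (hc.1.le.trans hu.1.le) hu1]
      have := hphi c u hc.1.le hu.1 hu1
      rw [hceq] at this; linarith
  constructor
  · intro t ht0 htm
    have : h t < 0 := by
      rcases le_or_gt t c with htc | htc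
      · have := hanti ⟨le_rfl, hc.1.le⟩ ⟨ht0.le, htc⟩ ht0
        rw [h0] at this; linarith
      · have := (hmono m hc.2.le hm1) ⟨htc.le, htm.le⟩ ⟨hc.2.le, le_rfl⟩ htm
        rw [hM] at this; linarith
    simp only [hh] at this; linarith
  · intro t htm ht1
    have : 0 < h t := by
      have := (hmono t (hc.2.le.trans htm.le) ht1) ⟨hc.2.le, htm.le⟩ ⟨(hc.2.trans htm).le, le_rfl⟩ htm
      rw [hM] at this; linarith
    simp only [hh] at this; linarith

lemma f_max (a m : ℝ) (ha : 1 < a) (hm0 : 0 < m) (hm1 : m < 1)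
    (hmeq : artanh m = a * m) :
    ∀ t ∈ Set.Icc (-1:ℝ) 1, (t ≠ m → t ≠ -m →
      a/2*t^2 - Lstar t < a/2*m^2 - Lstar m) := by
  set f : ℝ → ℝ := fun t => a/2*t^2 - Lstar t with hf
  have hfd : ∀ u ∈ Set.Ioo (-1:ℝ) 1, HasDerivAt f (a*u - artanh u) u := by
    intro u hu
    have h1 : HasDerivAt (fun t : ℝ => a/2*t^2) (a*u) u := by
      have := ((hasDerivAt_pow 2 u).const_mul (a/2 : ℝ))
      refine this.congr_deriv ?_
      push_cast; ring
    exact h1.sub (hasDerivAt_Lstar hu)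
  have hfc : Continuous f := by
    apply Continuous.sub _ continuous_Lstar
    continuity
  have hsign := artanh_sign a m ha hm0 hm1 hmeq
  have hfd' : ∀ u : ℝ, -1 < u → u < 1 → deriv f u = a*u - artanh u := fun u h1 h2 =>
    (hfd u ⟨h1, h2⟩).deriv
  have hmono : StrictMonoOn f (Set.Icc 0 m) := by
    apply strictMonoOn_of_deriv_pos (convex_Icc 0 m) (hfc.continuousOn)
    intro u hu
    rw [interior_Icc] at hu
    rw [hfd' u (by linarith [hu.1]) (by linarith [hu.2])]
    have := hsign.1 u hu.1 hu.2
    linarith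
  have hanti : StrictAntiOn f (Set.Icc m 1) := by
    apply strictAntiOn_of_deriv_neg (convex_Icc m 1) (hfc.continuousOn)
    intro u hu
    rw [interior_Icc] at hu
    rw [hfd' u (by linarith [hu.1]) hu.2]
    have := hsign.2 u hu.1 hu.2
    linarith
  -- main claim on [0,1]
  have key : ∀ t : ℝ, 0 ≤ t → t ≤ 1 → t ≠ m → f t < f m := by
    intro t ht0 ht1 htm
    rcases lt_or_gt_of_ne htm with hlt | hgt
    · exact hmono ⟨ht0, hlt.le⟩ ⟨hm0.le, le_rfl⟩ hlt
    · exact hanti ⟨le_rfl, hm1.le⟩ ⟨hgt.le, ht1⟩ hgt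
  intro t ht htm htm'
  have hfeven : ∀ s : ℝ, f (-s) = f s := by
    intro s; simp only [hf]; rw [Lstar_neg]; ring
  rcases le_or_gt 0 t with ht0 | ht0
  · exact key t ht0 ht.2 htm
  · have := key (-t) (by linarith) (by linarith [ht.1]) (by intro hc; exact htm' (by linarith))
    rw [hfeven] at this; exact this


open Matrix in
theorem stmt12 (k : ℕ) (hk : 2 ≤ k) (A : Matrix (Fin k) (Fin k) ℝ) (hA : A.IsSymm)
    (hpos : ∀ i j, i ≠ j → 0 < A i j) (c₁ c₂ : ℝ)
    (hd : ∀ i, A i i = c₁)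
    (hoff : ∀ i, ∑ j ∈ Finset.univ.filter (fun j => j ≠ i), A i j = c₂)
    (hc : c₁ + c₂ > k)
    (m : ℝ) (hm : m ∈ Set.Ioo (0 : ℝ) 1)
    (hmeq : artanh m = ((c₁ + c₂) / k) * m)
    (I : (Fin k → ℝ) → ℝ)
    (hI : I = fun z => (1 / (2 * (k : ℝ) ^ 2)) * (z ⬝ᵥ A.mulVec z)
      - (1 / (k : ℝ)) * ∑ i, Lstar (z i)) :
    ∀ x : Fin k → ℝ, (∀ i, x i ∈ Set.Icc (-1 : ℝ) 1) →
      ((∀ y : Fin k → ℝ, (∀ i, y i ∈ Set.Icc (-1 : ℝ) 1) → I y ≤ I x)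
        ↔ (x = fun _ => m) ∨ (x = fun _ => -m)) := by
  obtain ⟨hm0, hm1⟩ := hm
  have hk0 : (0:ℝ) < k := by
    have : (2:ℝ) ≤ k := by exact_mod_cast hk
    linarith
  set a : ℝ := (c₁ + c₂) / k with hadef
  have ha : 1 < a := by
    rw [hadef]
    rw [lt_div_iff₀ hk0]
    linarith
  have hmeq' : artanh m = a * m := hmeq
  -- row and column sums
  have rowsum : ∀ i, ∑ j, A i j = c₁ + c₂ := by
    intro i
    have h1 := hoff i
    rw [Finset.filter_ne'] at h1
    rw [← Finset.add_sum_erase _ _ (Finset.mem_univ i), hd i, h1]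
  have hsymm : ∀ i j, A j i = A i j := by
    intro i j
    have := hA
    rw [Matrix.IsSymm] at this
    have := congrFun (congrFun this i) j
    simpa [Matrix.transpose_apply] using this
  have colsum : ∀ j, ∑ i, A i j = c₁ + c₂ := by
    intro j
    rw [show (∑ i, A i j) = ∑ i, A j i from Finset.sum_congr rfl (fun i _ => hsymm j i)]
    exact rowsum j
  -- quadratic form expansion
  have hQexp : ∀ z : Fin k → ℝ, z ⬝ᵥ A.mulVec z = ∑ i, ∑ j, z i * (A i j * z j) := by
    intro z
    simp [dotProduct, Matrix.mulVec, Finset.mul_sum]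
  -- the comparison sum
  have hT : ∀ z : Fin k → ℝ,
      ∑ i, ∑ j, A i j * ((z i)^2 + (z j)^2)/2 = (c₁+c₂) * ∑ i, (z i)^2 := by
    intro z
    have split : ∑ i, ∑ j, A i j * ((z i)^2 + (z j)^2)/2
        = (∑ i, ∑ j, A i j * (z i)^2/2) + ∑ i, ∑ j, A i j * (z j)^2/2 := by
      rw [← Finset.sum_add_distrib]
      apply Finset.sum_congr rfl; intro i _
      rw [← Finset.sum_add_distrib]
      apply Finset.sum_congr rfl; intro j _
      ring
    have h1 : ∑ i, ∑ j, A i j * (z i)^2/2 = (c₁+c₂)/2 * ∑ i, (z i)^2 := by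
      rw [Finset.mul_sum]
      apply Finset.sum_congr rfl
      intro i _
      rw [show (∑ j, A i j * (z i)^2/2) = (∑ j, A i j) * ((z i)^2/2) from by
        rw [Finset.sum_mul]; apply Finset.sum_congr rfl; intros; ring, rowsum i]
      ring
    have h2 : ∑ i, ∑ j, A i j * (z j)^2/2 = (c₁+c₂)/2 * ∑ i, (z i)^2 := by
      rw [Finset.sum_comm]
      rw [Finset.mul_sum]
      apply Finset.sum_congr rfl
      intro j _
      rw [show (∑ i, A i j * (z j)^2/2) = (∑ i, A i j) * ((z j)^2/2) from by
        rw [Finset.sum_mul]; apply Finset.sum_congr rfl; intros; ring, colsum j]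
      ring
    rw [split, h1, h2]; ring
  -- termwise bound
  have hterm : ∀ (z : Fin k → ℝ) i j, z i * (A i j * z j) ≤ A i j * ((z i)^2 + (z j)^2)/2 := by
    intro z i j
    rcases eq_or_ne i j with rfl | hij
    · apply le_of_eq; ring
    · nlinarith [mul_nonneg (hpos i j hij).le (sq_nonneg (z i - z j))]
  have hQle : ∀ z : Fin k → ℝ, z ⬝ᵥ A.mulVec z ≤ (c₁+c₂) * ∑ i, (z i)^2 := by
    intro z
    rw [hQexp z, ← hT z]
    apply Finset.sum_le_sum; intro i _
    exact Finset.sum_le_sum (fun j _ => hterm z i j)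
  have hQlt : ∀ (z : Fin k → ℝ) i0 j0, i0 ≠ j0 → z i0 ≠ z j0 →
      z ⬝ᵥ A.mulVec z < (c₁+c₂) * ∑ i, (z i)^2 := by
    intro z i0 j0 hij hz
    rw [hQexp z, ← hT z]
    apply Finset.sum_lt_sum
    · intro i _; exact Finset.sum_le_sum (fun j _ => hterm z i j)
    · refine ⟨i0, Finset.mem_univ _, ?_⟩
      apply Finset.sum_lt_sum
      · intro j _; exact hterm z i0 j
      · refine ⟨j0, Finset.mem_univ _, ?_⟩
        have hsq : 0 < (z i0 - z j0)^2 :=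
          lt_of_le_of_ne (sq_nonneg _) (Ne.symm (pow_ne_zero 2 (sub_ne_zero.mpr hz)))
        nlinarith [mul_pos (hpos i0 j0 hij) hsq]
  -- I at a constant vector
  have hIconst : ∀ c : ℝ, I (fun _ => c) = a/2*c^2 - Lstar c := by
    intro c
    simp only [hI]
    have hq : (fun _ : Fin k => c) ⬝ᵥ A.mulVec (fun _ => c) = (k:ℝ) * ((c₁+c₂)*c^2) := by
      rw [hQexp]
      rw [show (∑ i : Fin k, ∑ j, c * (A i j * c)) = ∑ i : Fin k, (c₁+c₂)*c^2 from
        Finset.sum_congr rfl (fun i _ => by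
          rw [show (∑ j, c * (A i j * c)) = (∑ j, A i j) * c^2 from by
            rw [Finset.sum_mul]; apply Finset.sum_congr rfl; intros; ring, rowsum i])]
      rw [Finset.sum_const, Finset.card_univ, Fintype.card_fin, nsmul_eq_mul]
    rw [hq, Finset.sum_const, Finset.card_univ, Fintype.card_fin, nsmul_eq_mul, hadef]
    field_simp
  -- pointwise 1D bound, non-strict version
  have hfle : ∀ t ∈ Set.Icc (-1:ℝ) 1, a/2*t^2 - Lstar t ≤ a/2*m^2 - Lstar m := by
    intro t ht
    rcases eq_or_ne t m with rfl | h1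
    · exact le_rfl
    · rcases eq_or_ne t (-m) with rfl | h2
      · apply le_of_eq; rw [Lstar_neg]; ring
      · exact (f_max a m ha hm0 hm1 hmeq' t ht h1 h2).le
  -- upper bound for I
  have halg : ∀ y : Fin k → ℝ,
      (1/(2*(k:ℝ)^2)) * ((c₁+c₂) * ∑ i, (y i)^2) - (1/(k:ℝ)) * ∑ i, Lstar (y i)
        = (1/(k:ℝ)) * ∑ i, (a/2*(y i)^2 - Lstar (y i)) := by
    intro y
    rw [Finset.sum_sub_distrib]
    rw [show (∑ i, a/2*(y i)^2) = a/2 * ∑ i, (y i)^2 from by rw [Finset.mul_sum]]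
    rw [hadef]
    field_simp
  have hsum_le : ∀ y : Fin k → ℝ, (∀ i, y i ∈ Set.Icc (-1:ℝ) 1) →
      (1/(k:ℝ)) * ∑ i, (a/2*(y i)^2 - Lstar (y i)) ≤ a/2*m^2 - Lstar m := by
    intro y hy
    have h1 : ∑ i, (a/2*(y i)^2 - Lstar (y i)) ≤ ∑ _i : Fin k, (a/2*m^2 - Lstar m) :=
      Finset.sum_le_sum (fun i _ => hfle (y i) (hy i))
    rw [Finset.sum_const, Finset.card_univ, Fintype.card_fin, nsmul_eq_mul] at h1
    calc (1/(k:ℝ)) * ∑ i, (a/2*(y i)^2 - Lstar (y i))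
        ≤ (1/(k:ℝ)) * ((k:ℝ) * (a/2*m^2 - Lstar m)) := by
          apply mul_le_mul_of_nonneg_left h1 (by positivity)
      _ = a/2*m^2 - Lstar m := by field_simp
  have hub : ∀ y : Fin k → ℝ, (∀ i, y i ∈ Set.Icc (-1:ℝ) 1) →
      I y ≤ a/2*m^2 - Lstar m := by
    intro y hy
    simp only [hI]
    calc (1/(2*(k:ℝ)^2)) * (y ⬝ᵥ A.mulVec y) - (1/(k:ℝ)) * ∑ i, Lstar (y i)
        ≤ (1/(2*(k:ℝ)^2)) * ((c₁+c₂) * ∑ i, (y i)^2) - (1/(k:ℝ)) * ∑ i, Lstar (y i) := by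
          have := hQle y
          have hpos2 : (0:ℝ) < 1/(2*(k:ℝ)^2) := by positivity
          nlinarith [mul_le_mul_of_nonneg_left this hpos2.le]
      _ = (1/(k:ℝ)) * ∑ i, (a/2*(y i)^2 - Lstar (y i)) := halg y
      _ ≤ a/2*m^2 - Lstar m := hsum_le y hy
  have hub_strict : ∀ (y : Fin k → ℝ), (∀ i, y i ∈ Set.Icc (-1:ℝ) 1) →
      (∃ i0 j0, i0 ≠ j0 ∧ y i0 ≠ y j0) → I y < a/2*m^2 - Lstar m := by
    intro y hy ⟨i0, j0, hij, hz⟩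
    simp only [hI]
    calc (1/(2*(k:ℝ)^2)) * (y ⬝ᵥ A.mulVec y) - (1/(k:ℝ)) * ∑ i, Lstar (y i)
        < (1/(2*(k:ℝ)^2)) * ((c₁+c₂) * ∑ i, (y i)^2) - (1/(k:ℝ)) * ∑ i, Lstar (y i) := by
          have := hQlt y i0 j0 hij hz
          have hpos2 : (0:ℝ) < 1/(2*(k:ℝ)^2) := by positivity
          nlinarith [mul_lt_mul_of_pos_left this hpos2]
      _ = (1/(k:ℝ)) * ∑ i, (a/2*(y i)^2 - Lstar (y i)) := halg y
      _ ≤ a/2*m^2 - Lstar m := hsum_le y hy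
  -- main equivalence
  intro x hx
  constructor
  · intro hmax
    have hge : a/2*m^2 - Lstar m ≤ I x := by
      have := hmax (fun _ => m) (fun i => ⟨by linarith, hm1.le⟩)
      rwa [hIconst m] at this
    by_cases hconst : ∀ i j, x i = x j
    · have i0 : Fin k := ⟨0, by omega⟩
      have hxc : x = fun _ => x i0 := funext (fun i => hconst i i0)
      have h2 : I x = a/2*(x i0)^2 - Lstar (x i0) := by rw [hxc, hIconst]
      have hx0 : x i0 = m ∨ x i0 = -m := by
        by_contra hne
        push_neg at hne
        have := f_max a m ha hm0 hm1 hmeq' (x i0) (hx i0) hne.1 hne.2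
        rw [h2] at hge; linarith
      rcases hx0 with h | h
      · left; rw [hxc, h]
      · right; rw [hxc, h]
    · push_neg at hconst
      obtain ⟨i0, j0, hne⟩ := hconst
      have hij : i0 ≠ j0 := fun h => hne (by rw [h])
      have := hub_strict x hx ⟨i0, j0, hij, hne⟩
      exact absurd hge (not_le.mpr this)
  · intro hx'
    intro y hy
    rcases hx' with rfl | rfl
    · rw [hIconst m]; exact hub y hy
    · rw [hIconst (-m)]
      rw [show a/2*(-m)^2 - Lstar (-m) = a/2*m^2 - Lstar m from by rw [Lstar_neg]; ring]
      exact hub y hy
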